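/- Let o be the origin in the plane, and let s_i, s_j be points with ‖s_i‖ > 3, ‖s_j‖ > 3, and ‖s_i‖ ≥ ‖s_j‖. Let s'_i and s'_j be the radial projections of s_i and s_j onto the circle of radius 3 centered at o (i.e., s'_i = 3·s_i/‖s_i‖ and s'_j = 3·s_j/‖s_j‖). Suppose dist(s_i, s_j) ≥ ‖s_i‖ − 1. Then dist(s'_i, s'_j) ≥ 2. -/

import Mathlib

theorem stmt_5 (si sj : EuclideanSpace ℝ (Fin 2))
    (hi : ‖si‖ > 3) (hj : ‖sj‖ > 3) (hij : ‖si‖ ≥ ‖sj‖)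
    (h : dist si sj ≥ ‖si‖ - 1) :
    dist ((3 / ‖si‖) • si) ((3 / ‖sj‖) • sj) ≥ 2 := by
  set a := ‖si‖ with ha
  set b := ‖sj‖ with hb
  have ha0 : (0:ℝ) < a := by linarith
  have hb0 : (0:ℝ) < b := by linarith
  set t := (inner ℝ si sj : ℝ) with ht
  -- square of original distance
  have hd1 : dist si sj ^ 2 = a ^ 2 - 2 * t + b ^ 2 := by
    rw [dist_eq_norm, norm_sub_sq_real]
  have hdn : dist si sj ≥ 0 := dist_nonneg
  have h2 : (a - 1) ^ 2 ≤ a ^ 2 - 2 * t + b ^ 2 := by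
    rw [← hd1]
    nlinarith [h, hdn]
  have ht2 : 2 * t ≤ b ^ 2 + 2 * a - 1 := by nlinarith
  -- square of projected distance
  have hd2 : dist ((3 / a) • si) ((3 / b) • sj) ^ 2
      = 18 - 2 * ((3 / a) * (3 / b) * t) := by
    rw [dist_eq_norm, norm_sub_sq_real, norm_smul, norm_smul,
      real_inner_smul_left, real_inner_smul_right]
    have : |(3 : ℝ) / a| = 3 / a := abs_of_pos (by positivity)
    rw [Real.norm_eq_abs, Real.norm_eq_abs, this,
      abs_of_pos (show (0:ℝ) < 3 / b by positivity),
      div_mul_cancel₀ (3:ℝ) ha0.ne', div_mul_cancel₀ (3:ℝ) hb0.ne']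
    ring
  have hkey : 9 * (b ^ 2 + 2 * a - 1) ≤ 14 * (a * b) := by nlinarith
  have hsq : dist ((3 / a) • si) ((3 / b) • sj) ^ 2 ≥ 4 := by
    rw [hd2]
    have hab : (0:ℝ) < a * b := by positivity
    have : (3 / a) * (3 / b) * t = 9 * t / (a * b) := by
      rw [div_mul_div_comm]; ring
    rw [this]
    have h3 : 9 * t / (a * b) ≤ 7 := by
      rw [div_le_iff₀ hab]; nlinarith
    linarith
  nlinarith [dist_nonneg (x := (3 / a) • si) (y := (3 / b) • sj)]
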